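/- Fix p ∈ (0,1) and R_e > 1, and for δ ∈ (0,1) let z(δ) ∈ (0,1) be the unique solution of G(δ, z, R_e) = 0 where G(δ,z,R_e) = p·e^{−δR_e z/(pδ+1−p)} + (1−p)·e^{−R_e z/(pδ+1−p)} + z − 1. Then z(δ) is strictly increasing in δ. -/
import Mathlib

private lemma exp_cvx {a b t : ℝ} (hab : a ≠ b) (ht : 0 < t) (ht1 : t < 1) :
    Real.exp ((1-t)*a + t*b) < (1-t)*Real.exp a + t*Real.exp b := by
  have := strictConvexOn_exp.2 (Set.mem_univ a) (Set.mem_univ b) hab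
    (by linarith : (0:ℝ) < 1 - t) ht (by ring)
  simpa using this

/-- majorization step: contracting the pair toward its p-weighted mean strictly
decreases the p-weighted sum of exp(-·). -/
private lemma key {p a1 b1 a2 b2 : ℝ} (hp0 : 0 < p) (hp1 : p < 1)
    (h1 : a1 < a2) (h2 : a2 < b2) (h3 : b2 < b1)
    (hm : p*a1 + (1-p)*b1 = p*a2 + (1-p)*b2) :
    p*Real.exp (-a2) + (1-p)*Real.exp (-b2) < p*Real.exp (-a1) + (1-p)*Real.exp (-b1) := by
  have hba : 0 < b1 - a1 := by linarith
  have hba' : b1 - a1 ≠ 0 := ne_of_gt hba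
  set t := (a2 - a1)/(b1 - a1) with htdef
  set u := (b2 - a1)/(b1 - a1) with hudef
  have ht0 : 0 < t := div_pos (by linarith) hba
  have ht1 : t < 1 := (div_lt_one hba).2 (by linarith)
  have hu0 : 0 < u := div_pos (by linarith) hba
  have hu1 : u < 1 := (div_lt_one hba).2 (by linarith)
  have hne : -a1 ≠ -b1 := by intro h; apply hba'; linarith [neg_injective h]
  have ea2 : -a2 = (1-t)*(-a1) + t*(-b1) := by
    rw [htdef]; field_simp; ring
  have eb2 : -b2 = (1-u)*(-a1) + u*(-b1) := by
    rw [hudef]; field_simp; ring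
  have c1 : Real.exp (-a2) < (1-t)*Real.exp (-a1) + t*Real.exp (-b1) := by
    rw [ea2]; exact exp_cvx hne ht0 ht1
  have c2 : Real.exp (-b2) < (1-u)*Real.exp (-a1) + u*Real.exp (-b1) := by
    rw [eb2]; exact exp_cvx hne hu0 hu1
  have halpha : p*t + (1-p)*u = 1-p := by
    rw [htdef, hudef]; field_simp; linear_combination -hm
  have h3' : (p*t + (1-p)*u) * (Real.exp (-b1) - Real.exp (-a1))
      = (1-p) * (Real.exp (-b1) - Real.exp (-a1)) := by rw [halpha]
  nlinarith [mul_lt_mul_of_pos_left c1 hp0,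
    mul_lt_mul_of_pos_left c2 (by linarith : (0:ℝ) < 1 - p), h3']

/-- strict convexity of exp(-c·) between 0 and z1 -/
private lemma conv {c z1 z2 : ℝ} (hcz : 0 < c * z1) (h0 : 0 < z2) (h : z2 < z1) :
    Real.exp (-(c*z2)) < (1 - z2/z1) + (z2/z1) * Real.exp (-(c*z1)) := by
  have hz1 : 0 < z1 := lt_trans h0 h
  have hz1' : z1 ≠ 0 := ne_of_gt hz1
  set t := z2/z1 with htdef
  have ht0 : 0 < t := div_pos h0 hz1
  have ht1 : t < 1 := (div_lt_one hz1).2 h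
  have hne : (0:ℝ) ≠ -(c*z1) := by intro hh; nlinarith
  have e : -(c*z2) = (1-t)*0 + t*(-(c*z1)) := by
    rw [htdef]; field_simp; ring
  calc Real.exp (-(c*z2)) = Real.exp ((1-t)*0 + t*(-(c*z1))) := by rw [e]
    _ < (1-t)*Real.exp 0 + t*Real.exp (-(c*z1)) := exp_cvx hne ht0 ht1
    _ = (1 - t) + t * Real.exp (-(c*z1)) := by rw [Real.exp_zero]; ring

theorem stmt_12 (p Re : ℝ) (hp : p ∈ Set.Ioo (0:ℝ) 1) (hRe : 1 < Re) (Z : ℝ → ℝ)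
    (hZ : ∀ δ ∈ Set.Ioo (0:ℝ) 1, Z δ ∈ Set.Ioo (0:ℝ) 1 ∧
      p * Real.exp (-(δ * Re * Z δ / (p * δ + 1 - p)))
        + (1 - p) * Real.exp (-(Re * Z δ / (p * δ + 1 - p))) + Z δ - 1 = 0) :
    StrictMonoOn Z (Set.Ioo (0:ℝ) 1) := by
  obtain ⟨hp0, hp1⟩ := hp
  intro x hx y hy hxy
  obtain ⟨hx0, hx1⟩ := hx
  obtain ⟨hy0, hy1⟩ := hy
  obtain ⟨⟨hZx0, hZx1⟩, hGx⟩ := hZ x ⟨hx0, hx1⟩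
  obtain ⟨⟨hZy0, hZy1⟩, hGy⟩ := hZ y ⟨hy0, hy1⟩
  have hRe0 : (0:ℝ) < Re := by linarith
  have hsx : (0:ℝ) < p * x + 1 - p := by nlinarith
  have hsy : (0:ℝ) < p * y + 1 - p := by nlinarith
  have hz0 : 0 < Z x := hZx0
  -- step 1: G(y, Z x) < G(x, Z x) = 0
  have hkey : p*Real.exp (-(y * Re * Z x / (p * y + 1 - p)))
      + (1-p)*Real.exp (-(Re * Z x / (p * y + 1 - p)))
      < p*Real.exp (-(x * Re * Z x / (p * x + 1 - p)))
      + (1-p)*Real.exp (-(Re * Z x / (p * x + 1 - p))) := by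
    apply key hp0 hp1
    · -- a1 < a2
      rw [div_lt_div_iff₀ hsx hsy]
      nlinarith [mul_pos (mul_pos (mul_pos hRe0 hz0) (show (0:ℝ) < 1 - p by linarith)) (show (0:ℝ) < y - x by linarith)]
    · -- a2 < b2
      apply div_lt_div_of_pos_right ?_ hsy
      nlinarith [mul_pos hRe0 hz0]
    · -- b2 < b1
      apply div_lt_div_of_pos_left (mul_pos hRe0 hz0) hsx (by nlinarith)
    · -- means equal
      field_simp
      ring
  have hlt : p * Real.exp (-(y * Re * Z x / (p * y + 1 - p)))
      + (1 - p) * Real.exp (-(Re * Z x / (p * y + 1 - p))) + Z x - 1 < 0 := by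
    linarith
  -- step 2: conclude by strict convexity in z
  by_contra hcon
  push_neg at hcon
  rcases eq_or_lt_of_le hcon with heq | hlt2
  · rw [heq] at hGy; linarith
  · -- Z y < Z x, derive contradiction from convexity
    set w := Z y with hwdef
    set z := Z x with hzdef
    have hw0 : 0 < w := hZy0
    set t := w / z with htdef
    have ht0 : 0 < t := div_pos hw0 hz0
    have htz : t * z = w := by rw [htdef]; field_simp
    have hc1 : 0 < y * Re / (p * y + 1 - p) := by positivity
    have hc2 : 0 < Re / (p * y + 1 - p) := by positivity
    have e1 : -(y * Re * w / (p * y + 1 - p)) = -((y * Re / (p * y + 1 - p)) * w) := by ring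
    have e2 : -(Re * w / (p * y + 1 - p)) = -((Re / (p * y + 1 - p)) * w) := by ring
    have e1' : -(y * Re * z / (p * y + 1 - p)) = -((y * Re / (p * y + 1 - p)) * z) := by ring
    have e2' : -(Re * z / (p * y + 1 - p)) = -((Re / (p * y + 1 - p)) * z) := by ring
    have conv1 : Real.exp (-((y * Re / (p * y + 1 - p)) * w))
        < (1 - t) + t * Real.exp (-((y * Re / (p * y + 1 - p)) * z)) :=
      conv (mul_pos hc1 hz0) hw0 hlt2
    have conv2 : Real.exp (-((Re / (p * y + 1 - p)) * w))
        < (1 - t) + t * Real.exp (-((Re / (p * y + 1 - p)) * z)) :=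
      conv (mul_pos hc2 hz0) hw0 hlt2
    rw [e1, e2] at hGy
    rw [e1', e2'] at hlt
    have hneg : p * (t * Real.exp (-((y * Re / (p * y + 1 - p)) * z)))
        + (1 - p) * (t * Real.exp (-((Re / (p * y + 1 - p)) * z))) + w - t < 0 := by
      have hexp : t * (p * Real.exp (-((y * Re / (p * y + 1 - p)) * z))
          + (1 - p) * Real.exp (-((Re / (p * y + 1 - p)) * z)) + z - 1)
        = p * (t * Real.exp (-((y * Re / (p * y + 1 - p)) * z)))
          + (1 - p) * (t * Real.exp (-((Re / (p * y + 1 - p)) * z))) + w - t := by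
        rw [← htz]; ring
      rw [← hexp]
      exact mul_neg_of_pos_of_neg ht0 hlt
    have P1 := mul_lt_mul_of_pos_left conv1 hp0
    have P2 := mul_lt_mul_of_pos_left conv2 (by linarith : (0:ℝ) < 1 - p)
    ring_nf at P1 P2 hneg hGy
    linarith [P1, P2, hneg, hGy]
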